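/- Let π be a minimal valid function. Suppose that for every minimal valid function π*, S(π) ⊆ S(π*) implies π* = π. Then π is a facet. -/

import Mathlib

open scoped BigOperators
set_option maxHeartbeats 1000000

noncomputable section

/-- `ℝ^k` with the Euclidean norm. -/
abbrev Vec (k : ℕ) := EuclideanSpace ℝ (Fin k)

/-- The point of `ℝ^k` with the given integer coordinates. -/
def intVec (k : ℕ) (w : Fin k → ℤ) : Vec k := WithLp.toLp 2 (fun i => (w i : ℝ))

/-- A feasible solution of the infinite group relaxation: a finitely supported
`s : ℝ^k → ℕ` with `f + ∑ r, s r • r ∈ ℤ^k`. -/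
def IsFeasible (k : ℕ) (f : Vec k) (s : Vec k →₀ ℕ) : Prop :=
  ∃ w : Fin k → ℤ, f + ∑ r ∈ s.support, (s r : ℝ) • r = intVec k w

/-- A valid function for the infinite group relaxation. -/
def IsValid (k : ℕ) (f : Vec k) (π : Vec k → ℝ) : Prop :=
  (∀ r, 0 ≤ π r) ∧
  ∀ s : Vec k →₀ ℕ, IsFeasible k f s → 1 ≤ ∑ r ∈ s.support, π r * (s r : ℝ)

/-- A minimal valid function: no valid `π' ≠ π` with `π' ≤ π` pointwise. -/
def IsMinimal (k : ℕ) (f : Vec k) (π : Vec k → ℝ) : Prop :=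
  IsValid k f π ∧ ¬ ∃ π' : Vec k → ℝ, IsValid k f π' ∧ π' ≠ π ∧ ∀ r, π' r ≤ π r

/-- `S(θ)`: the feasible solutions satisfying the inequality of `θ` at equality. -/
def Ssol (k : ℕ) (f : Vec k) (θ : Vec k → ℝ) : Set (Vec k →₀ ℕ) :=
  {s | IsFeasible k f s ∧ ∑ r ∈ s.support, θ r * (s r : ℝ) = 1}

/-- A facet. -/
def IsFacet (k : ℕ) (f : Vec k) (π : Vec k → ℝ) : Prop :=
  IsValid k f π ∧
  ∀ π' : Vec k → ℝ, IsValid k f π' → Ssol k f π ⊆ Ssol k f π' → π' = π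

/-- An extreme valid function. -/
def IsExtremeValid (k : ℕ) (f : Vec k) (π : Vec k → ℝ) : Prop :=
  IsValid k f π ∧ ∀ π₁ π₂ : Vec k → ℝ, IsValid k f π₁ → IsValid k f π₂ →
    (∀ r, π r = (1 / 2) * π₁ r + (1 / 2) * π₂ r) → π₁ = π ∧ π₂ = π

/-- `E(θ)`: the pairs where `θ` is additive. -/
def Eadd (k : ℕ) (θ : Vec k → ℝ) : Set (Vec k × Vec k) :=
  {p | θ (p.1 + p.2) = θ p.1 + θ p.2}

/-- `θ` is genuinely `k`-dimensional: it does not factor through a linear map to `ℝ^(k-1)`. -/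
def GenuinelyFullDim (k : ℕ) (θ : Vec k → ℝ) : Prop :=
  ¬ ∃ (φ : Vec (k - 1) → ℝ) (T : Vec k →ₗ[ℝ] Vec (k - 1)), θ = φ ∘ T

/-- The cone generated by a finite family of vectors. -/
def coneOf {k m : ℕ} (v : Fin m → Vec k) : Set (Vec k) :=
  {x | ∃ lam : Fin m → ℝ, (∀ i, 0 ≤ lam i) ∧ x = ∑ i, lam i • v i}

/-- The cone generated by a set of vectors. -/
def coneOfSet {k : ℕ} (Vs : Set (Vec k)) : Set (Vec k) :=
  {x | ∃ (n : ℕ) (v : Fin n → Vec k) (lam : Fin n → ℝ),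
    (∀ i, v i ∈ Vs) ∧ (∀ i, 0 ≤ lam i) ∧ x = ∑ i, lam i • v i}

/-- A polyhedron: an intersection of finitely many closed halfspaces. -/
def IsPolyhedron {k : ℕ} (P : Set (Vec k)) : Prop :=
  ∃ (n : ℕ) (a : Fin n → Vec k) (b : Fin n → ℝ),
    P = {x | ∀ i, (inner ℝ (a i) x : ℝ) ≤ b i}

/-- A face of a polyhedron cut out by a valid inequality. -/
def IsFace {k : ℕ} (F P : Set (Vec k)) : Prop :=
  ∃ (a : Vec k) (b : ℝ), (∀ x ∈ P, (inner ℝ a x : ℝ) ≤ b) ∧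
    F = {x | x ∈ P ∧ (inner ℝ a x : ℝ) = b}

/-- A polyhedral complex in `ℝ^k`. -/
structure PolyhedralComplex (k : ℕ) where
  cells : Set (Set (Vec k))
  poly : ∀ P ∈ cells, IsPolyhedron P
  faces_mem : ∀ P ∈ cells, ∀ F : Set (Vec k), IsFace F P → F ∈ cells
  inter_face : ∀ P ∈ cells, ∀ Q ∈ cells, IsFace (P ∩ Q) P ∧ IsFace (P ∩ Q) Q

/-- A maximal cell of a polyhedral complex. -/
def IsMaximalCell {k : ℕ} (PC : PolyhedralComplex k) (P : Set (Vec k)) : Prop :=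
  P ∈ PC.cells ∧ ∀ Q ∈ PC.cells, P ⊆ Q → Q = P

/-- A pure complex: all maximal cells are full-dimensional. -/
def PolyhedralComplex.Pure {k : ℕ} (PC : PolyhedralComplex k) : Prop :=
  ∀ P : Set (Vec k), IsMaximalCell PC P → (interior P).Nonempty

/-- A complete complex: the union of the cells is all of `ℝ^k`. -/
def PolyhedralComplex.Complete {k : ℕ} (PC : PolyhedralComplex k) : Prop :=
  ⋃₀ PC.cells = Set.univ

/-- A polyhedral fan: finitely many cells, all of which are cones. -/
def IsFan {k : ℕ} (F : PolyhedralComplex k) : Prop :=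
  F.cells.Finite ∧ ∀ C ∈ F.cells, ∀ x ∈ C, ∀ t : ℝ, 0 ≤ t → t • x ∈ C

/-- A locally finite polyhedral complex: near each point it looks like a translated fan. -/
def PolyhedralComplex.LocFinite {k : ℕ} (PC : PolyhedralComplex k) : Prop :=
  ∀ r : Vec k, ∃ ε : ℝ, 0 < ε ∧ ∃ F : PolyhedralComplex k, IsFan F ∧
    {S : Set (Vec k) | ∃ P ∈ PC.cells, S = P ∩ Metric.ball r ε ∧ S.Nonempty} =
    {S : Set (Vec k) | ∃ C ∈ F.cells,
      S = ((fun x => x + r) '' C) ∩ Metric.ball r ε ∧ S.Nonempty}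

/-- `θ` is piecewise linear with cell complex `PC` (pure and complete), the maximal
cell `P` carrying the gradient `grad P`. -/
def IsPWLWith {k : ℕ} (PC : PolyhedralComplex k) (grad : Set (Vec k) → Vec k)
    (θ : Vec k → ℝ) : Prop :=
  PC.Pure ∧ PC.Complete ∧
  ∀ P : Set (Vec k), IsMaximalCell PC P →
    ∃ δ : ℝ, ∀ x ∈ P, θ x = (inner ℝ (grad P) x : ℝ) + δ

/-- The gradient set of a piecewise linear function. -/
def gradSet {k : ℕ} (PC : PolyhedralComplex k) (grad : Set (Vec k) → Vec k) : Set (Vec k) :=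
  {g | ∃ P : Set (Vec k), IsMaximalCell PC P ∧ grad P = g}

section Aux

open Finsupp

variable {k : ℕ}

/-- The linear functional `s ↦ ∑ θ r * s r`. -/
def Lsum (θ : Vec k → ℝ) (s : Vec k →₀ ℕ) : ℝ := ∑ r ∈ s.support, θ r * (s r : ℝ)

/-- The vector sum of a finitely supported multiset of vectors. -/
def VSum (s : Vec k →₀ ℕ) : Vec k := ∑ r ∈ s.support, (s r : ℝ) • r

lemma Lsum_eq_sum (θ : Vec k → ℝ) (s : Vec k →₀ ℕ) :
    Lsum θ s = s.sum fun x n => θ x * (n : ℝ) := rfl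

lemma VSum_eq_sum (s : Vec k →₀ ℕ) :
    VSum s = s.sum fun x n => (n : ℝ) • x := rfl

lemma Lsum_add (θ : Vec k → ℝ) (s t : Vec k →₀ ℕ) :
    Lsum θ (s + t) = Lsum θ s + Lsum θ t := by
  simp only [Lsum_eq_sum]
  exact Finsupp.sum_add_index' (by simp) (by intro a m n; push_cast; ring)

lemma VSum_add (s t : Vec k →₀ ℕ) : VSum (s + t) = VSum s + VSum t := by
  simp only [VSum_eq_sum]
  exact Finsupp.sum_add_index' (by simp) (by intro a m n; push_cast; rw [add_smul])

lemma Lsum_single (θ : Vec k → ℝ) (c : Vec k) (m : ℕ) :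
    Lsum θ (Finsupp.single c m) = θ c * m := by
  simp only [Lsum_eq_sum]
  exact Finsupp.sum_single_index (by simp)

lemma VSum_single (c : Vec k) (m : ℕ) :
    VSum (Finsupp.single c m) = (m : ℝ) • c := by
  simp only [VSum_eq_sum]
  exact Finsupp.sum_single_index (by simp)

lemma Lsum_zero (θ : Vec k → ℝ) : Lsum θ 0 = 0 := by
  simp [Lsum_eq_sum]

lemma VSum_zero : VSum (0 : Vec k →₀ ℕ) = 0 := by
  simp [VSum_eq_sum]

lemma Lsum_nsmul (θ : Vec k → ℝ) (m : ℕ) (s : Vec k →₀ ℕ) :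
    Lsum θ (m • s) = (m : ℝ) * Lsum θ s := by
  induction m with
  | zero => simp [Lsum_zero]
  | succ n ih =>
    rw [succ_nsmul, Lsum_add, ih]
    push_cast; ring

lemma VSum_nsmul (m : ℕ) (s : Vec k →₀ ℕ) :
    VSum (m • s) = (m : ℝ) • VSum s := by
  induction m with
  | zero => simp [VSum_zero]
  | succ n ih =>
    rw [succ_nsmul, VSum_add, ih]
    push_cast; rw [add_smul, one_smul]

lemma Lsum_nonneg {θ : Vec k → ℝ} (hθ : ∀ r, 0 ≤ θ r) (s : Vec k →₀ ℕ) :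
    0 ≤ Lsum θ s :=
  Finset.sum_nonneg fun r _ => mul_nonneg (hθ r) (by positivity)

lemma Lsum_congr {θ θ' : Vec k → ℝ} {s : Vec k →₀ ℕ}
    (h : ∀ r ∈ s.support, θ r = θ' r) : Lsum θ s = Lsum θ' s :=
  Finset.sum_congr rfl fun r hr => by rw [h r hr]

lemma Lsum_mono {θ θ' : Vec k → ℝ} (h : ∀ r, θ r ≤ θ' r) (s : Vec k →₀ ℕ) :
    Lsum θ s ≤ Lsum θ' s :=
  Finset.sum_le_sum fun r _ => mul_le_mul_of_nonneg_right (h r) (by positivity)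

/-- The set of integer points. -/
def Zset (k : ℕ) : Set (Vec k) := {v | ∃ w : Fin k → ℤ, v = intVec k w}

lemma intVec_apply (w : Fin k → ℤ) (i : Fin k) : intVec k w i = (w i : ℝ) := rfl

lemma Zset_zero : (0 : Vec k) ∈ Zset k := by
  refine ⟨0, ?_⟩
  ext i
  simp [intVec]

lemma Zset_add {a b : Vec k} (ha : a ∈ Zset k) (hb : b ∈ Zset k) : a + b ∈ Zset k := by
  obtain ⟨w, rfl⟩ := ha; obtain ⟨w', rfl⟩ := hb
  refine ⟨w + w', ?_⟩
  ext i
  show intVec k w i + intVec k w' i = _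
  simp [intVec]

lemma Zset_neg {a : Vec k} (ha : a ∈ Zset k) : -a ∈ Zset k := by
  obtain ⟨w, rfl⟩ := ha
  refine ⟨-w, ?_⟩
  ext i
  show -(intVec k w i) = _
  simp [intVec]

lemma Zset_sub {a b : Vec k} (ha : a ∈ Zset k) (hb : b ∈ Zset k) : a - b ∈ Zset k := by
  rw [sub_eq_add_neg]; exact Zset_add ha (Zset_neg hb)

lemma Zset_nsmul {a : Vec k} (n : ℕ) (ha : a ∈ Zset k) : (n : ℝ) • a ∈ Zset k := by
  induction n with
  | zero => simpa using Zset_zero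
  | succ m ih =>
    push_cast
    rw [add_smul, one_smul]
    exact Zset_add ih ha

lemma Zset_sum {ι : Type*} (t : Finset ι) (g : ι → Vec k)
    (hg : ∀ i ∈ t, g i ∈ Zset k) : (∑ i ∈ t, g i) ∈ Zset k := by
  classical
  induction t using Finset.induction_on with
  | empty => simpa using Zset_zero
  | @insert a t' hnot ih =>
    rw [Finset.sum_insert hnot]
    exact Zset_add (hg a (t'.mem_insert_self a)) (ih fun i hi => hg i (Finset.mem_insert_of_mem hi))

lemma isFeasible_iff {f : Vec k} {s : Vec k →₀ ℕ} :
    IsFeasible k f s ↔ f + VSum s ∈ Zset k := Iff.rfl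

lemma isValid_sum {f : Vec k} {θ : Vec k → ℝ} (hθ : IsValid k f θ)
    {s : Vec k →₀ ℕ} (hs : IsFeasible k f s) : 1 ≤ Lsum θ s := hθ.2 s hs

/-- The replacement lemma: if one copy of `c` can be replaced by the multiset `t`
preserving feasibility, then a minimal function satisfies `π c ≤ Lsum π t`. -/
lemma replace_le {f : Vec k} {π : Vec k → ℝ} (hmin : IsMinimal k f π)
    (c : Vec k) (t : Vec k →₀ ℕ) (hct : VSum t - c ∈ Zset k) :
    π c ≤ Lsum π t := by
  classical
  by_contra hlt
  push_neg at hlt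
  set π₃ := Function.update π c (Lsum π t) with hπ₃
  have hupd_ne : ∀ r, r ≠ c → π₃ r = π r := fun r hr => Function.update_of_ne hr _ _
  have hπ₃valid : IsValid k f π₃ := by
    constructor
    · intro r
      by_cases hr : r = c
      · subst hr; rw [hπ₃, Function.update_self]
        exact Lsum_nonneg hmin.1.1 t
      · rw [hupd_ne r hr]; exact hmin.1.1 r
    · intro s hs
      show 1 ≤ Lsum π₃ s
      set m := s c with hm
      have hsplit : s.erase c + Finsupp.single c m = s := Finsupp.erase_add_single c s
      set s' := s.erase c + m • t with hs'def
      have hVs : VSum s = VSum (s.erase c) + (m : ℝ) • c := by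
        conv_lhs => rw [← hsplit]
        rw [VSum_add, VSum_single]
      have hs' : IsFeasible k f s' := by
        rw [isFeasible_iff]
        have : f + VSum s' = (f + VSum s) + (m : ℝ) • (VSum t - c) := by
          rw [hs'def, VSum_add, VSum_nsmul, hVs, smul_sub]
          abel
        rw [this]
        exact Zset_add (isFeasible_iff.mp hs) (Zset_nsmul m hct)
      have h1 : 1 ≤ Lsum π s' := isValid_sum hmin.1 hs'
      have hLs' : Lsum π s' = Lsum π (s.erase c) + (m : ℝ) * Lsum π t := by
        rw [hs'def, Lsum_add, Lsum_nsmul]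
      have hLerase : Lsum π₃ (s.erase c) = Lsum π (s.erase c) := by
        refine Lsum_congr fun r hr => ?_
        have : r ≠ c := by
          rw [Finsupp.support_erase] at hr
          exact Finset.ne_of_mem_erase hr
        exact hupd_ne r this
      have : Lsum π₃ s = Lsum π s' := by
        conv_lhs => rw [← hsplit]
        rw [Lsum_add, Lsum_single, hLerase, hLs', hπ₃, Function.update_self]
        ring
      rw [this]; exact h1
  refine hmin.2 ⟨π₃, hπ₃valid, ?_, ?_⟩
  · intro heq
    have := congrFun heq c
    rw [hπ₃, Function.update_self] at this
    exact absurd this (ne_of_lt hlt)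
  · intro r
    by_cases hr : r = c
    · subst hr; rw [hπ₃, Function.update_self]; exact le_of_lt hlt
    · rw [hupd_ne r hr]

lemma minimal_zero {f : Vec k} {π : Vec k → ℝ} (hmin : IsMinimal k f π) : π 0 = 0 := by
  have h1 : π 0 ≤ Lsum π 0 := by
    refine replace_le hmin 0 0 ?_
    simpa [VSum_zero] using Zset_zero
  rw [Lsum_zero] at h1
  exact le_antisymm h1 (hmin.1.1 0)

lemma minimal_subadd {f : Vec k} {π : Vec k → ℝ} (hmin : IsMinimal k f π) (a b : Vec k) :
    π (a + b) ≤ π a + π b := by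
  have := replace_le hmin (a + b) (Finsupp.single a 1 + Finsupp.single b 1) ?_
  · rwa [Lsum_add, Lsum_single, Lsum_single, Nat.cast_one, mul_one, mul_one] at this
  · rw [VSum_add, VSum_single, VSum_single, Nat.cast_one, one_smul, one_smul]
    simpa using Zset_zero

lemma minimal_periodic {f : Vec k} {π : Vec k → ℝ} (hmin : IsMinimal k f π)
    (x : Vec k) {z : Vec k} (hz : z ∈ Zset k) : π (x + z) = π x := by
  have h1 : π (x + z) ≤ π x := by
    have := replace_le hmin (x + z) (Finsupp.single x 1) ?_
    · rwa [Lsum_single, Nat.cast_one, mul_one] at this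
    · rw [VSum_single, Nat.cast_one, one_smul]
      have : x - (x + z) = -z := by abel
      rw [this]; exact Zset_neg hz
  have h2 : π x ≤ π (x + z) := by
    have := replace_le hmin x (Finsupp.single (x + z) 1) ?_
    · rwa [Lsum_single, Nat.cast_one, mul_one] at this
    · rw [VSum_single, Nat.cast_one, one_smul]
      have : x + z - x = z := by abel
      rw [this]; exact hz
  exact le_antisymm h1 h2

lemma minimal_nsmul_le {f : Vec k} {π : Vec k → ℝ} (hmin : IsMinimal k f π)
    (n : ℕ) (v : Vec k) : π ((n : ℝ) • v) ≤ (n : ℝ) * π v := by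
  induction n with
  | zero => simp [minimal_zero hmin]
  | succ m ih =>
    push_cast
    rw [add_smul, one_smul, add_mul, one_mul]
    calc π ((m : ℝ) • v + v) ≤ π ((m : ℝ) • v) + π v := minimal_subadd hmin _ _
      _ ≤ (m : ℝ) * π v + π v := by linarith

lemma minimal_shift_nsmul {f : Vec k} {π : Vec k → ℝ} (hmin : IsMinimal k f π)
    (x v : Vec k) (n : ℕ) : π (x + (n : ℝ) • v) ≤ π x + (n : ℝ) * π v := by
  calc π (x + (n : ℝ) • v) ≤ π x + π ((n : ℝ) • v) := minimal_subadd hmin _ _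
    _ ≤ π x + (n : ℝ) * π v := by linarith [minimal_nsmul_le hmin n v]

lemma minimal_gen_subadd {f : Vec k} {π : Vec k → ℝ} (hmin : IsMinimal k f π)
    (s : Vec k →₀ ℕ) : π (VSum s) ≤ Lsum π s := by
  induction s using Finsupp.induction with
  | zero => simp [VSum_zero, Lsum_zero, minimal_zero hmin]
  | single_add a n s _ _ ih =>
    rw [VSum_add, Lsum_add, VSum_single, Lsum_single]
    calc π ((n : ℝ) • a + VSum s) ≤ π ((n : ℝ) • a) + π (VSum s) := minimal_subadd hmin _ _
      _ ≤ (n : ℝ) * π a + Lsum π s := by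
          have := minimal_nsmul_le hmin n a
          linarith
      _ = π a * (n : ℝ) + Lsum π s := by ring

lemma valid_two_point {f : Vec k} {θ : Vec k → ℝ} (hθ : IsValid k f θ)
    (r y : Vec k) (hry : f + (r + y) ∈ Zset k) : 1 ≤ θ r + θ y := by
  have hfeas : IsFeasible k f (Finsupp.single r 1 + Finsupp.single y 1) := by
    rw [isFeasible_iff, VSum_add, VSum_single, VSum_single, Nat.cast_one, one_smul, one_smul]
    exact hry
  have := isValid_sum hθ hfeas
  rwa [Lsum_add, Lsum_single, Lsum_single, Nat.cast_one, mul_one, mul_one] at this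

/-- Core of the symmetry argument: a violated symmetry pair with positive value
contradicts minimality. -/
lemma sym_core {f : Vec k} {π : Vec k → ℝ} (hmin : IsMinimal k f π)
    (rb yb : Vec k) (hy : yb = -f - rb) (hpos : 0 < π rb)
    (hgt : 1 < π rb + π yb) : False := by
  classical
  set ε := π rb + π yb - 1 with hε
  have hε0 : 0 < ε := by linarith
  set δ := min (π rb / 2) (ε * π rb / 2) with hδ
  have hδ0 : 0 < δ := lt_min (by linarith) (by positivity)
  have hδ1 : δ ≤ π rb / 2 := min_le_left _ _
  have hδ2 : δ ≤ ε * π rb / 2 := min_le_right _ _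
  set C : Vec k → Prop := fun x => x - rb ∈ Zset k with hC
  have hCrb : C rb := by
    show rb - rb ∈ Zset k
    rw [sub_self]; exact Zset_zero
  have hπC : ∀ x, C x → π x = π rb := by
    intro x hx
    have : x = rb + (x - rb) := by abel
    rw [this, minimal_periodic hmin rb hx]
  set π' : Vec k → ℝ := fun x => if C x then π rb - δ else π x with hπ'
  have hπ'C : ∀ x, C x → π' x = π rb - δ := fun x hx => if_pos hx
  have hπ'nC : ∀ x, ¬ C x → π' x = π x := fun x hx => if_neg hx
  have hπ'le : ∀ x, π' x ≤ π x := by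
    intro x
    by_cases hx : C x
    · rw [hπ'C x hx, hπC x hx]; linarith
    · rw [hπ'nC x hx]
  have hπ'valid : IsValid k f π' := by
    constructor
    · intro x
      by_cases hx : C x
      · rw [hπ'C x hx]; linarith
      · rw [hπ'nC x hx]; exact hmin.1.1 x
    · intro s hs
      set s₁ := s.filter C with hs₁
      set s₂ := s.filter (fun x => ¬ C x) with hs₂
      have hsplit : s₁ + s₂ = s := Finsupp.filter_pos_add_filter_neg s C
      have hL2 : Lsum π' s₂ = Lsum π s₂ := by
        refine Lsum_congr fun r hr => ?_
        rw [hs₂, Finsupp.support_filter] at hr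
        exact hπ'nC r (Finset.mem_filter.mp hr).2
      set m := ∑ x ∈ s₁.support, s₁ x with hm
      have hL1 : Lsum π' s₁ = (π rb - δ) * (m : ℝ) := by
        rw [Lsum, hm]
        push_cast
        rw [Finset.mul_sum]
        refine Finset.sum_congr rfl fun x hx => ?_
        have hxC : C x := by
          rw [hs₁, Finsupp.support_filter] at hx
          exact (Finset.mem_filter.mp hx).2
        rw [hπ'C x hxC]
      have hLdecomp : Lsum π' s = (π rb - δ) * (m : ℝ) + Lsum π s₂ := by
        conv_lhs => rw [← hsplit]
        rw [Lsum_add, hL1, hL2]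
      show 1 ≤ Lsum π' s
      by_cases hm0 : m = 0
      · have hs₁0 : s₁ = 0 := by
          ext x
          by_contra hx
          have hxs : x ∈ s₁.support := Finsupp.mem_support_iff.mpr hx
          have h1 : 1 ≤ s₁ x := Nat.one_le_iff_ne_zero.mpr hx
          have : 1 ≤ m := le_trans h1 (Finset.single_le_sum (fun i _ => Nat.zero_le _) hxs)
          omega
        have : Lsum π' s = Lsum π s₂ := by rw [hLdecomp, hm0]; push_cast; ring
        rw [this]
        have : s₂ = s := by rw [← hsplit, hs₁0, zero_add]
        rw [this]
        exact isValid_sum hmin.1 hs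
      · have hm1 : 1 ≤ m := Nat.one_le_iff_ne_zero.mpr hm0
        -- coset part of the vector sum is m • rb modulo integers
        have hV1 : VSum s₁ - (m : ℝ) • rb ∈ Zset k := by
          have : VSum s₁ - (m : ℝ) • rb = ∑ x ∈ s₁.support, (s₁ x : ℝ) • (x - rb) := by
            rw [VSum, hm]
            push_cast
            rw [Finset.sum_smul, ← Finset.sum_sub_distrib]
            refine Finset.sum_congr rfl fun x _ => ?_
            rw [smul_sub]
          rw [this]
          refine Zset_sum _ _ fun x hx => ?_
          have hxC : C x := by
            rw [hs₁, Finsupp.support_filter] at hx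
            exact (Finset.mem_filter.mp hx).2
          exact Zset_nsmul (s₁ x) hxC
        have hfeas2 : f + (m : ℝ) • rb + VSum s₂ ∈ Zset k := by
          have hfs : f + VSum s ∈ Zset k := isFeasible_iff.mp hs
          have hVs : VSum s = VSum s₁ + VSum s₂ := by rw [← hsplit, VSum_add]
          have : f + (m : ℝ) • rb + VSum s₂ = (f + VSum s) - (VSum s₁ - (m : ℝ) • rb) := by
            rw [hVs]; abel
          rw [this]
          exact Zset_sub hfs hV1
        set n := m - 1 with hn
        have hmn : (m : ℝ) = (n : ℝ) + 1 := by
          rw [hn]; push_cast [Nat.cast_sub hm1]; ring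
        set x₀ := yb - (n : ℝ) • rb with hx₀
        have hux : VSum s₂ - x₀ ∈ Zset k := by
          have : VSum s₂ - x₀ = f + (m : ℝ) • rb + VSum s₂ := by
            rw [hx₀, hy, hmn, add_smul, one_smul]; abel
          rw [this]; exact hfeas2
        have hπu : π (VSum s₂) = π x₀ := by
          have : VSum s₂ = x₀ + (VSum s₂ - x₀) := by abel
          rw [this, minimal_periodic hmin x₀ hux]
        have hyb_le : π yb ≤ π x₀ + (n : ℝ) * π rb := by
          have : yb = x₀ + (n : ℝ) • rb := by rw [hx₀]; abel
          rw [this]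
          exact minimal_shift_nsmul hmin x₀ rb n
        have hR : π (VSum s₂) ≤ Lsum π s₂ := minimal_gen_subadd hmin s₂
        have hRlow : π yb - (n : ℝ) * π rb ≤ Lsum π s₂ := by
          rw [← hπu] at hyb_le; linarith
        have hRnn : 0 ≤ Lsum π s₂ := Lsum_nonneg hmin.1.1 s₂
        rw [hLdecomp]
        by_cases hcase : (m : ℝ) * π rb ≤ 2
        · have hmδ : (m : ℝ) * δ ≤ ε := by
            calc (m : ℝ) * δ ≤ (m : ℝ) * (ε * π rb / 2) := by
                  refine mul_le_mul_of_nonneg_left hδ2 (by positivity)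
              _ = (ε / 2) * ((m : ℝ) * π rb) := by ring
              _ ≤ (ε / 2) * 2 := by
                  refine mul_le_mul_of_nonneg_left hcase (by positivity)
              _ = ε := by ring
          have : (π rb - δ) * (m : ℝ) + (π yb - (n : ℝ) * π rb) = 1 + ε - (m : ℝ) * δ := by
            rw [hmn, hε]; ring
          nlinarith [hRlow]
        · push_neg at hcase
          have h1 : (π rb / 2) * (m : ℝ) ≥ 1 := by nlinarith
          have : (π rb - δ) * (m : ℝ) ≥ (π rb / 2) * (m : ℝ) := by
            have : π rb - δ ≥ π rb / 2 := by linarith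
            have hm0' : (0 : ℝ) ≤ (m : ℝ) := by positivity
            nlinarith
          linarith
  refine hmin.2 ⟨π', hπ'valid, ?_, hπ'le⟩
  intro heq
  have := congrFun heq rb
  rw [hπ'C rb hCrb] at this
  linarith

lemma minimal_symmetric {f : Vec k} {π : Vec k → ℝ} (hmin : IsMinimal k f π)
    (r : Vec k) : π r + π (-f - r) = 1 := by
  set y := -f - r with hy
  have hlow : 1 ≤ π r + π y := by
    refine valid_two_point hmin.1 r y ?_
    have : f + (r + y) = 0 := by rw [hy]; abel
    rw [this]; exact Zset_zero
  by_contra hne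
  have hgt : 1 < π r + π y := lt_of_le_of_ne hlow (fun hh => hne hh.symm)
  by_cases hr : 0 < π r
  · exact sym_core hmin r y hy hr hgt
  · have hr0 : π r = 0 := le_antisymm (not_lt.mp hr) (hmin.1.1 r)
    have hy0 : 0 < π y := by linarith
    refine sym_core hmin y r ?_ hy0 (by linarith)
    rw [hy]; abel

end Aux

/-- If every minimal valid function `π*` with `S(π) ⊆ S(π*)` equals `π`, then `π` is a
facet. -/
theorem statement5 (k : ℕ) (hk : 1 ≤ k) (f : Vec k) (π : Vec k → ℝ)
    (hmin : IsMinimal k f π)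
    (h : ∀ πs : Vec k → ℝ, IsMinimal k f πs → Ssol k f π ⊆ Ssol k f πs → πs = π) :
    IsFacet k f π := by
  classical
  refine ⟨hmin.1, fun π' hπ'valid hsub => ?_⟩
  -- Step 1: by Zorn's lemma, find a minimal valid function below π'
  have hzorn : ∃ m : (Vec k → ℝ)ᵒᵈ, Maximal
      (· ∈ {g : (Vec k → ℝ)ᵒᵈ | IsValid k f (OrderDual.ofDual g) ∧
        ∀ r, OrderDual.ofDual g r ≤ π' r}) m := by
    apply zorn_le₀
    intro c hcS hchain
    by_cases hc : c.Nonempty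
    · -- pointwise infimum of the chain
      haveI : Nonempty c := hc.to_subtype
      set g₀ : Vec k → ℝ := fun r => ⨅ p : c, OrderDual.ofDual p.1 r with hg₀
      have hbdd : ∀ r : Vec k, BddBelow (Set.range fun p : c => OrderDual.ofDual p.1 r) := by
        intro r
        refine ⟨0, ?_⟩
        rintro x ⟨p, rfl⟩
        exact (hcS p.2).1.1 r
      have hg₀le : ∀ p : c, ∀ r, g₀ r ≤ OrderDual.ofDual p.1 r := by
        intro p r
        exact ciInf_le (hbdd r) p
      have hg₀nonneg : ∀ r, 0 ≤ g₀ r := by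
        intro r
        exact le_ciInf fun p => (hcS p.2).1.1 r
      have htot : ∀ p ∈ c, ∀ q ∈ c, (∀ r, OrderDual.ofDual p r ≤ OrderDual.ofDual q r) ∨
          (∀ r, OrderDual.ofDual q r ≤ OrderDual.ofDual p r) := by
        intro p hp q hq
        by_cases hpq : p = q
        · subst hpq; left; intro r; exact le_rfl
        · rcases hchain hp hq hpq with h' | h'
          · right; intro r; exact h' r
          · left; intro r; exact h' r
      have hg₀valid : IsValid k f g₀ := by
        constructor
        · exact hg₀nonneg
        · intro s hs
          show 1 ≤ Lsum g₀ s
          refine le_of_forall_sub_le fun ε hε0 => ?_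
          set B : ℝ := (∑ x ∈ s.support, (s x : ℝ)) + 1 with hB
          have hBpos : 0 < B := by
            have : 0 ≤ ∑ x ∈ s.support, (s x : ℝ) :=
              Finset.sum_nonneg fun x _ => by positivity
            linarith
          have hchoice : ∀ x : Vec k, ∃ p : c, OrderDual.ofDual p.1 x < g₀ x + ε / B := by
            intro x
            refine exists_lt_of_ciInf_lt ?_
            show g₀ x < g₀ x + ε / B
            have : 0 < ε / B := by positivity
            linarith
          choose P hP using hchoice
          -- common lower bound of the chosen chain elements over the support
          have hlb : ∀ t : Finset (Vec k), ∃ q ∈ c,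
              ∀ x ∈ t, ∀ r, OrderDual.ofDual q r ≤ OrderDual.ofDual (P x).1 r := by
            intro t
            induction t using Finset.induction_on with
            | empty =>
              obtain ⟨p, hp⟩ := hc
              exact ⟨p, hp, fun x hx => absurd hx (Finset.notMem_empty x)⟩
            | @insert a t' hnot ih =>
              obtain ⟨q, hqc, hq⟩ := ih
              rcases htot q hqc (P a).1 (P a).2 with h' | h'
              · refine ⟨q, hqc, fun x hx r => ?_⟩
                rcases Finset.mem_insert.mp hx with rfl | hx'
                · exact h' r
                · exact hq x hx' r
              · refine ⟨(P a).1, (P a).2, fun x hx r => ?_⟩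
                rcases Finset.mem_insert.mp hx with rfl | hx'
                · exact le_rfl
                · exact le_trans (h' r) (hq x hx' r)
          obtain ⟨q, hqc, hq⟩ := hlb s.support
          have hqvalid : 1 ≤ Lsum (OrderDual.ofDual q) s := (hcS hqc).1.2 s hs
          have hstep : Lsum (OrderDual.ofDual q) s ≤ Lsum g₀ s + ε := by
            calc Lsum (OrderDual.ofDual q) s
                ≤ ∑ x ∈ s.support, (g₀ x + ε / B) * (s x : ℝ) := by
                  refine Finset.sum_le_sum fun x hx => ?_
                  refine mul_le_mul_of_nonneg_right ?_ (by positivity)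
                  exact le_trans (hq x hx x) (le_of_lt (hP x))
              _ = Lsum g₀ s + (ε / B) * ∑ x ∈ s.support, (s x : ℝ) := by
                  rw [Lsum, Finset.mul_sum, ← Finset.sum_add_distrib]
                  exact Finset.sum_congr rfl fun x _ => by ring
              _ ≤ Lsum g₀ s + ε := by
                  have h1 : (ε / B) * ∑ x ∈ s.support, (s x : ℝ) ≤ (ε / B) * B := by
                    refine mul_le_mul_of_nonneg_left ?_ (by positivity)
                    rw [hB]; linarith
                  have h2 : (ε / B) * B = ε := by field_simp
                  linarith
          linarith
      refine ⟨OrderDual.toDual g₀, ⟨hg₀valid, ?_⟩, ?_⟩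
      · intro r
        obtain ⟨p, hp⟩ := hc
        exact le_trans (hg₀le ⟨p, hp⟩ r) ((hcS hp).2 r)
      · intro z hz
        intro r
        exact hg₀le ⟨z, hz⟩ r
    · -- empty chain: π' itself is a bound
      rw [Set.not_nonempty_iff_eq_empty] at hc
      refine ⟨OrderDual.toDual π', ⟨hπ'valid, fun r => le_rfl⟩, ?_⟩
      intro z hz
      rw [hc] at hz
      exact absurd hz (Set.notMem_empty z)
  obtain ⟨mOD, hmS, hmax⟩ := hzorn
  set πm : Vec k → ℝ := OrderDual.ofDual mOD with hπm
  have hπmvalid : IsValid k f πm := hmS.1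
  have hπmleπ' : ∀ r, πm r ≤ π' r := hmS.2
  have hπmmin : IsMinimal k f πm := by
    refine ⟨hπmvalid, ?_⟩
    rintro ⟨g, hgvalid, hgne, hgle⟩
    have hgS : OrderDual.toDual g ∈ {g : (Vec k → ℝ)ᵒᵈ | IsValid k f (OrderDual.ofDual g) ∧
        ∀ r, OrderDual.ofDual g r ≤ π' r} :=
      ⟨hgvalid, fun r => le_trans (hgle r) (hπmleπ' r)⟩
    have hle : mOD ≤ OrderDual.toDual g := fun r => hgle r
    have := hmax hgS hle
    exact hgne (le_antisymm hgle this)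
  -- Step 2: S(π) ⊆ S(πm)
  have hsub2 : Ssol k f π ⊆ Ssol k f πm := by
    rintro s ⟨hfeas, heq⟩
    obtain ⟨-, heq'⟩ := hsub ⟨hfeas, heq⟩
    refine ⟨hfeas, le_antisymm ?_ ?_⟩
    · calc (Lsum πm s) ≤ Lsum π' s := Lsum_mono hπmleπ' s
        _ = 1 := heq'
    · exact hπmvalid.2 s hfeas
  -- Step 3: use the hypothesis
  have hπmeq : πm = π := h πm hπmmin hsub2
  have hππ' : ∀ r, π r ≤ π' r := by
    intro r
    rw [← hπmeq]
    exact hπmleπ' r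
  -- Step 4: symmetry forces equality
  funext r
  set y := -f - r with hy
  have hsymπ : π r + π y = 1 := minimal_symmetric hmin r
  have hfr : f + (r + y) ∈ Zset k := by
    have : f + (r + y) = 0 := by rw [hy]; abel
    rw [this]; exact Zset_zero
  have hs₀feas : IsFeasible k f (Finsupp.single r 1 + Finsupp.single y 1) := by
    rw [isFeasible_iff, VSum_add, VSum_single, VSum_single, Nat.cast_one, one_smul, one_smul]
    exact hfr
  have hs₀ : (Finsupp.single r 1 + Finsupp.single y 1) ∈ Ssol k f π := by
    refine ⟨hs₀feas, ?_⟩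
    show Lsum π _ = 1
    rw [Lsum_add, Lsum_single, Lsum_single, Nat.cast_one, mul_one, mul_one]
    exact hsymπ
  obtain ⟨-, heq'⟩ := hsub hs₀
  have hsymπ' : π' r + π' y = 1 := by
    have : Lsum π' (Finsupp.single r 1 + Finsupp.single y 1) = 1 := heq'
    rwa [Lsum_add, Lsum_single, Lsum_single, Nat.cast_one, mul_one, mul_one] at this
  have : π' r ≤ π r := by
    have h1 : π y ≤ π' y := hππ' y
    linarith
  exact le_antisymm this (hππ' r)
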